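/- arXiv:1607.00932 — 4 statements merged into one kernel-verified Lean document; each statement's English description precedes it below -/
import Mathlib

section
/- For every positive integer n and m ≤ n/2, the partial sum of binomial coefficients satisfies Σ_{i=0}^{m} C(n,i) ≤ 2^{n·H(m/n)}, where H is the binary entropy function. -/
/-- The binary entropy function `H(p) = -p log₂ p - (1-p) log₂ (1-p)`
(with the convention `H(0) = 0`). -/
noncomputable def binEntropy (p : ℝ) : ℝ :=
  -p * Real.logb 2 p - (1 - p) * Real.logb 2 (1 - p)

/-- For every positive integer `n` and `m ≤ n/2`,
`Σ_{i=0}^{m} C(n,i) ≤ 2^(n·H(m/n))`. -/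
theorem sum_choose_le_two_rpow_entropy (n m : ℕ) (hn : 0 < n) (hm : (m : ℝ) ≤ (n : ℝ) / 2) :
    (∑ i ∈ Finset.range (m + 1), (n.choose i : ℝ))
      ≤ 2 ^ ((n : ℝ) * binEntropy ((m : ℝ) / (n : ℝ))) := by
  rcases Nat.eq_zero_or_pos m with rfl | hm0
  · simp [binEntropy]
  -- setup
  have hnR : (0:ℝ) < n := by exact_mod_cast hn
  set p : ℝ := (m : ℝ) / n with hp_def
  have hp0 : 0 < p := div_pos (by exact_mod_cast hm0) hnR
  have hp2 : p ≤ 1/2 := by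
    rw [hp_def, div_le_div_iff₀ hnR (by norm_num)]
    linarith
  have hp1 : p < 1 := by linarith
  have hq0 : 0 < 1 - p := by linarith
  have hpq : p ≤ 1 - p := by linarith
  have hmn : m ≤ n := by
    have : (m:ℝ) ≤ n := by linarith
    exact_mod_cast this
  have hnp : (n:ℝ) * p = m := by
    rw [hp_def]; field_simp [hnR.ne']
  have hnq : (n:ℝ) * (1 - p) = (n - m : ℕ) := by
    push_cast [hmn]
    rw [mul_sub, hnp]; ring
  -- key inequality: sum * (p^m * (1-p)^(n-m)) ≤ 1
  have key : (∑ i ∈ Finset.range (m + 1), (n.choose i : ℝ)) * (p ^ m * (1 - p) ^ (n - m)) ≤ 1 := by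
    have h1 : (∑ i ∈ Finset.range (m + 1), (n.choose i : ℝ) * (p ^ m * (1 - p) ^ (n - m)))
        ≤ ∑ i ∈ Finset.range (m + 1), (n.choose i : ℝ) * (p ^ i * (1 - p) ^ (n - i)) := by
      apply Finset.sum_le_sum
      intro i hi
      have him : i ≤ m := Nat.lt_succ_iff.mp (Finset.mem_range.mp hi)
      have hin : n - i = (m - i) + (n - m) := by omega
      apply mul_le_mul_of_nonneg_left _ (by positivity)
      calc p ^ m * (1 - p) ^ (n - m) = p ^ i * p ^ (m - i) * (1 - p) ^ (n - m) := by
            rw [← pow_add, Nat.add_sub_cancel' him]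
        _ ≤ p ^ i * (1 - p) ^ (m - i) * (1 - p) ^ (n - m) := by
            apply mul_le_mul_of_nonneg_right _ (by positivity)
            exact mul_le_mul_of_nonneg_left (pow_le_pow_left₀ hp0.le hpq _) (by positivity)
        _ = p ^ i * (1 - p) ^ (n - i) := by rw [hin, pow_add, mul_assoc]
    have h2 : (∑ i ∈ Finset.range (m + 1), (n.choose i : ℝ) * (p ^ i * (1 - p) ^ (n - i)))
        ≤ ∑ i ∈ Finset.range (n + 1), (n.choose i : ℝ) * (p ^ i * (1 - p) ^ (n - i)) := by
      apply Finset.sum_le_sum_of_subset_of_nonneg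
      · exact Finset.range_subset_range.mpr (by omega)
      · intro i _ _; positivity
    have h3 : (∑ i ∈ Finset.range (n + 1), (n.choose i : ℝ) * (p ^ i * (1 - p) ^ (n - i))) = 1 := by
      have := add_pow p (1 - p) n
      have h := (add_pow p (1 - p) n).symm
      calc (∑ i ∈ Finset.range (n + 1), (n.choose i : ℝ) * (p ^ i * (1 - p) ^ (n - i)))
          = ∑ i ∈ Finset.range (n + 1), p ^ i * (1 - p) ^ (n - i) * (n.choose i : ℝ) := by
            apply Finset.sum_congr rfl; intro i _; ring
        _ = (p + (1 - p)) ^ n := h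
        _ = 1 := by norm_num
    rw [Finset.sum_mul]
    exact le_trans (le_of_eq rfl) (le_trans h1 (le_trans h2 h3.le))
  -- rewrite RHS
  have hRHS : (2:ℝ) ^ ((n : ℝ) * binEntropy p) = (p ^ m * (1 - p) ^ (n - m))⁻¹ := by
    have hexp : (n : ℝ) * binEntropy p
        = (-(m:ℝ)) * Real.logb 2 p + (-((n - m : ℕ):ℝ)) * Real.logb 2 (1 - p) := by
      unfold binEntropy
      rw [mul_sub]
      rw [show (n:ℝ) * (-p * Real.logb 2 p) = -((n:ℝ)*p) * Real.logb 2 p by ring, hnp]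
      rw [show (n:ℝ) * ((1 - p) * Real.logb 2 (1 - p)) = ((n:ℝ)*(1-p)) * Real.logb 2 (1 - p) by ring, hnq]
      ring
    rw [hexp, Real.rpow_add (by norm_num)]
    rw [mul_comm (-(m:ℝ)) _, mul_comm (-((n - m : ℕ):ℝ)) _]
    rw [Real.rpow_mul (by norm_num), Real.rpow_mul (by norm_num)]
    rw [Real.rpow_logb (by norm_num) (by norm_num) hp0,
        Real.rpow_logb (by norm_num) (by norm_num) hq0]
    rw [Real.rpow_neg hp0.le, Real.rpow_neg hq0.le,
        Real.rpow_natCast, Real.rpow_natCast, mul_inv]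
  have hc : 0 < p ^ m * (1 - p) ^ (n - m) := by positivity
  rw [hRHS, inv_eq_one_div, le_div_iff₀ hc]
  exact key
end

section
/- Fix S ∈ {0,1}^m with Hamming weight |S| = q, and let ℓ ∈ {q,...,T}. Then the number of tuples (i₁,...,i_ℓ) ∈ [m]^ℓ with e_{i₁} ⊕ ⋯ ⊕ e_{i_ℓ} = S is 0 if ℓ − q is odd, and is at most ℓ! · m^{(ℓ−q)/2} / (2^{(ℓ−q)/2} · ((ℓ−q)/2)!) if ℓ − q is even. -/
open Finset

private def cnt (m ℓ : ℕ) (S : Fin m → ZMod 2) : ℕ :=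
  (Finset.univ.filter (fun t : Fin ℓ → Fin m =>
      (fun j => ∑ r : Fin ℓ, if t r = j then (1 : ZMod 2) else 0) = S)).card

lemma hn_eq (m : ℕ) (S : Fin m → ZMod 2) :
    hammingNorm S = (univ.filter fun i => S i ≠ 0).card := rfl

lemma zmod2_ne : ∀ a : ZMod 2, a ≠ 0 → a = 1 := by decide

lemma sum_S (m : ℕ) (S : Fin m → ZMod 2) :
    ∑ j, S j = (hammingNorm S : ZMod 2) := by
  rw [hn_eq]
  calc ∑ j, S j = ∑ j ∈ univ.filter (fun i => S i ≠ 0), S j :=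
        (Finset.sum_filter_ne_zero _).symm
    _ = ∑ _j ∈ univ.filter (fun i => S i ≠ 0), (1 : ZMod 2) :=
        Finset.sum_congr rfl fun j hj => zmod2_ne _ (Finset.mem_filter.mp hj).2
    _ = _ := by simp

lemma parity_lemma {m ℓ : ℕ} {S : Fin m → ZMod 2} (h : cnt m ℓ S ≠ 0) :
    (ℓ : ZMod 2) = (hammingNorm S : ZMod 2) := by
  rw [cnt, Finset.card_ne_zero] at h
  obtain ⟨t, ht⟩ := h.exists_mem
  have ht' := (Finset.mem_filter.mp ht).2
  have h1 : ∑ j, S j = (ℓ : ZMod 2) := by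
    rw [← ht']
    rw [Finset.sum_comm]
    simp [Finset.sum_ite_eq]
  rw [← sum_S, h1]

lemma cnt_zero_of_lt {m ℓ : ℕ} {S : Fin m → ZMod 2} (h : ℓ < hammingNorm S) :
    cnt m ℓ S = 0 := by
  rw [cnt, Finset.card_eq_zero, Finset.filter_eq_empty_iff]
  intro t _ ht
  have hsub : (univ.filter fun i => S i ≠ 0) ⊆ Finset.image t univ := by
    intro i hi
    have hSi := (Finset.mem_filter.mp hi).2
    by_contra hni
    apply hSi
    rw [← congrFun ht i]
    rw [Finset.sum_eq_zero]
    intro r _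
    rw [if_neg]
    intro he
    exact hni (Finset.mem_image.mpr ⟨r, Finset.mem_univ r, he⟩)
  have := Finset.card_le_card hsub
  rw [← hn_eq] at this
  have h2 := Finset.card_image_le (f := t) (s := univ)
  simp at h2
  omega

lemma zmod2_solve : ∀ a b c : ZMod 2, c + a = b → a = b + c := by decide
lemma zmod2_solve' : ∀ a b c : ZMod 2, a = b + c → c + a = b := by decide

lemma recur (m ℓ : ℕ) (S : Fin m → ZMod 2) :
    cnt m (ℓ+1) S = ∑ j : Fin m, cnt m ℓ (fun i => S i + if j = i then 1 else 0) := by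
  rw [cnt, Finset.card_eq_sum_card_fiberwise
    (f := fun t => t 0) (t := (univ : Finset (Fin m))) (fun x _ => Finset.mem_univ _)]
  refine Finset.sum_congr rfl fun j _ => ?_
  rw [Finset.filter_filter, cnt]
  refine Finset.card_bij' (fun t _ => t ∘ Fin.succ) (fun u _ => Fin.cons j u) ?_ ?_ ?_ ?_
  · intro t ht
    rw [Finset.mem_filter] at ht ⊢
    obtain ⟨-, ht, ht0⟩ := ht
    refine ⟨Finset.mem_univ _, funext fun i => ?_⟩
    have h := congrFun ht i
    rw [Fin.sum_univ_succ] at h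
    rw [ht0] at h
    exact zmod2_solve _ _ _ h
  · intro u hu
    rw [Finset.mem_filter] at hu ⊢
    obtain ⟨-, hu⟩ := hu
    refine ⟨Finset.mem_univ _, funext fun i => ?_, Fin.cons_zero _ _⟩
    rw [Fin.sum_univ_succ]
    simp only [Fin.cons_zero, Fin.cons_succ]
    exact zmod2_solve' _ _ _ (congrFun hu i)
  · intro t ht
    rw [Finset.mem_filter] at ht
    obtain ⟨-, -, ht0⟩ := ht
    funext r
    refine Fin.cases ?_ (fun r => ?_) r
    · simp [ht0]
    · simp [Fin.cons_succ]
  · intro u _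
    funext r
    simp [Fin.cons_succ]

lemma hn_flip (m : ℕ) (S : Fin m → ZMod 2) (j : Fin m) :
    hammingNorm (fun i => S i + if j = i then 1 else 0) =
      if S j = 0 then hammingNorm S + 1 else hammingNorm S - 1 := by
  have hz : ∀ a : ZMod 2, a + 1 ≠ 0 ↔ a = 0 := by decide
  by_cases hj : S j = 0
  · rw [if_pos hj, hn_eq, hn_eq]
    have hset : (univ.filter fun i => (S i + if j = i then 1 else 0) ≠ 0)
        = insert j (univ.filter fun i => S i ≠ 0) := by
      ext i
      by_cases hij : i = j
      · subst hij
        simp [hj, hz]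
      · simp [Ne.symm hij, hij, if_neg]
    rw [hset, Finset.card_insert_of_notMem (by simp [hj])]
  · rw [if_neg hj, hn_eq, hn_eq]
    have hset : (univ.filter fun i => (S i + if j = i then 1 else 0) ≠ 0)
        = (univ.filter fun i => S i ≠ 0).erase j := by
      ext i
      by_cases hij : i = j
      · subst hij
        simp [hz, zmod2_ne _ hj]
      · simp [Ne.symm hij, hij, if_neg]
    rw [hset, Finset.card_erase_of_mem (by simp [hj])]

lemma main_bound (m : ℕ) : ∀ ℓ q k : ℕ, ∀ S : Fin m → ZMod 2, hammingNorm S = q →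
    q + 2*k = ℓ →
    (cnt m ℓ S : ℝ) ≤ (Nat.factorial ℓ : ℝ) * (m : ℝ) ^ k
      / (2 ^ k * (Nat.factorial k : ℝ)) := by
  intro ℓ
  induction ℓ with
  | zero =>
    intro q k S hS hqk
    obtain ⟨rfl, rfl⟩ : q = 0 ∧ k = 0 := by omega
    have h1 : cnt m 0 S ≤ 1 := by
      have h := Finset.card_filter_le (univ : Finset (Fin 0 → Fin m))
        (fun t => (fun j => ∑ r : Fin 0, if t r = j then (1 : ZMod 2) else 0) = S)
      simpa [cnt, Finset.card_univ] using h
    have : (cnt m 0 S : ℝ) ≤ 1 := by exact_mod_cast h1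
    simpa [Nat.factorial] using this
  | succ ℓ ih =>
    intro q k S hS hqk
    have hqm : q ≤ m := hS ▸ hammingNorm_le_card_fintype.trans (by simp)
    rw [recur]
    push_cast
    rw [← Finset.sum_filter_add_sum_filter_not univ (fun j => S j = 0)]
    have hcard1 : (univ.filter (fun j : Fin m => ¬ S j = 0)).card = q := by
      rw [← hS, hn_eq]
    have hcard0 : (univ.filter (fun j : Fin m => S j = 0)).card = m - q := by
      have h := Finset.card_filter_add_card_filter_not
        (s := (univ : Finset (Fin m))) (p := fun j => S j = 0)
      rw [Finset.card_univ] at h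
      simp only [Fintype.card_fin] at h
      omega
    have hterm1 : ∀ j ∈ univ.filter (fun j : Fin m => ¬ S j = 0),
        (cnt m ℓ (fun i => S i + if j = i then 1 else 0) : ℝ)
          ≤ (Nat.factorial ℓ : ℝ) * (m : ℝ) ^ k / (2 ^ k * (Nat.factorial k : ℝ)) := by
      intro j hj
      have hSj := (Finset.mem_filter.mp hj).2
      have hqpos : 1 ≤ q := by
        rw [← hS, hn_eq]
        exact Finset.card_pos.mpr ⟨j, hj⟩
      have hflip : hammingNorm (fun i => S i + if j = i then 1 else 0) = q - 1 := by
        rw [hn_flip, if_neg hSj, hS]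
      exact ih (q-1) k _ hflip (by omega)
    have hsum1 : ∑ j ∈ univ.filter (fun j : Fin m => ¬ S j = 0),
        (cnt m ℓ (fun i => S i + if j = i then 1 else 0) : ℝ)
          ≤ (q : ℝ) * ((Nat.factorial ℓ : ℝ) * (m : ℝ) ^ k / (2 ^ k * (Nat.factorial k : ℝ))) := by
      calc _ ≤ (univ.filter (fun j : Fin m => ¬ S j = 0)).card •
            ((Nat.factorial ℓ : ℝ) * (m : ℝ) ^ k / (2 ^ k * (Nat.factorial k : ℝ))) :=
            Finset.sum_le_card_nsmul _ _ _ hterm1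
        _ = _ := by rw [hcard1, nsmul_eq_mul]
    cases k with
    | zero =>
      have hsum0 : ∑ j ∈ univ.filter (fun j : Fin m => S j = 0),
          (cnt m ℓ (fun i => S i + if j = i then 1 else 0) : ℝ) = 0 := by
        refine Finset.sum_eq_zero fun j hj => ?_
        have hSj := (Finset.mem_filter.mp hj).2
        have hflip : hammingNorm (fun i => S i + if j = i then 1 else 0) = q + 1 := by
          rw [hn_flip, if_pos hSj, hS]
        have : cnt m ℓ (fun i => S i + if j = i then 1 else 0) = 0 :=
          cnt_zero_of_lt (by omega)
        rw [this]; norm_num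
      rw [hsum0, zero_add]
      refine hsum1.trans ?_
      have hq : q = ℓ + 1 := by omega
      rw [hq]
      simp [Nat.factorial_succ]
    | succ k' =>
      have hsum0 : ∑ j ∈ univ.filter (fun j : Fin m => S j = 0),
          (cnt m ℓ (fun i => S i + if j = i then 1 else 0) : ℝ)
            ≤ ((m - q : ℕ) : ℝ) *
              ((Nat.factorial ℓ : ℝ) * (m : ℝ) ^ k' / (2 ^ k' * (Nat.factorial k' : ℝ))) := by
        have hterm0 : ∀ j ∈ univ.filter (fun j : Fin m => S j = 0),
            (cnt m ℓ (fun i => S i + if j = i then 1 else 0) : ℝ)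
              ≤ (Nat.factorial ℓ : ℝ) * (m : ℝ) ^ k' / (2 ^ k' * (Nat.factorial k' : ℝ)) := by
          intro j hj
          have hSj := (Finset.mem_filter.mp hj).2
          have hflip : hammingNorm (fun i => S i + if j = i then 1 else 0) = q + 1 := by
            rw [hn_flip, if_pos hSj, hS]
          exact ih (q+1) k' _ hflip (by omega)
        calc _ ≤ (univ.filter (fun j : Fin m => S j = 0)).card •
              ((Nat.factorial ℓ : ℝ) * (m : ℝ) ^ k' / (2 ^ k' * (Nat.factorial k' : ℝ))) :=
              Finset.sum_le_card_nsmul _ _ _ hterm0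
          _ = _ := by rw [hcard0, nsmul_eq_mul]
      set C : ℝ := (Nat.factorial ℓ : ℝ) * (m : ℝ) ^ k' / (2 ^ k' * (Nat.factorial k' : ℝ))
        with hC
      set A : ℝ := (Nat.factorial ℓ : ℝ) * (m : ℝ) ^ (k'+1)
        / (2 ^ (k'+1) * (Nat.factorial (k'+1) : ℝ)) with hA
      have hCpos : 0 ≤ C := by rw [hC]; positivity
      have hkey : 2 * ((k' : ℝ) + 1) * A = (m : ℝ) * C := by
        rw [hA, hC, Nat.factorial_succ, pow_succ, pow_succ]
        push_cast
        field_simp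
      have hmq : ((m - q : ℕ) : ℝ) ≤ (m : ℝ) := by
        have : (m - q : ℕ) ≤ m := Nat.sub_le m q
        exact_mod_cast this
      calc _ ≤ ((m - q : ℕ) : ℝ) * C + (q : ℝ) * A := add_le_add hsum0 hsum1
        _ ≤ (q : ℝ) * A + (m : ℝ) * C := by nlinarith
        _ = ((ℓ : ℝ) + 1) * A := by
              rw [← hkey]
              have h5 : (q : ℝ) + 2*((k' : ℝ)+1) = (ℓ : ℝ) + 1 := by
                exact_mod_cast congrArg (Nat.cast : ℕ → ℝ) hqk
              linear_combination A * h5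
        _ = _ := by rw [hA, Nat.factorial_succ (n := ℓ)]; push_cast; ring

/-- The number of tuples `(i₁,...,i_ℓ) ∈ [m]^ℓ` with `e_{i₁} ⊕ ⋯ ⊕ e_{i_ℓ} = S`
(each coordinate `j` of `S` equals the parity of `#{r : i_r = j}`) is `0` if `ℓ - q`
is odd, and at most `ℓ! · m^((ℓ−q)/2) / (2^((ℓ−q)/2) · ((ℓ−q)/2)!)` if `ℓ - q` is even,
where `q = |S|` is the Hamming weight of `S`. -/
theorem count_tuples_sum_basis_eq {m q ℓ T : ℕ} (S : Fin m → ZMod 2)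
    (hq : hammingNorm S = q) (hqℓ : q ≤ ℓ) (hℓT : ℓ ≤ T) :
    (Odd (ℓ - q) →
        (Finset.univ.filter (fun t : Fin ℓ → Fin m =>
          (fun j => ∑ r : Fin ℓ, if t r = j then (1 : ZMod 2) else 0) = S)).card = 0) ∧
      (Even (ℓ - q) →
        ((Finset.univ.filter (fun t : Fin ℓ → Fin m =>
            (fun j => ∑ r : Fin ℓ, if t r = j then (1 : ZMod 2) else 0) = S)).card : ℝ)
          ≤ (Nat.factorial ℓ : ℝ) * (m : ℝ) ^ ((ℓ - q) / 2)
              / (2 ^ ((ℓ - q) / 2) * (Nat.factorial ((ℓ - q) / 2) : ℝ))) := by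
  constructor
  · intro hodd
    by_contra h
    have hpar := parity_lemma (m := m) (ℓ := ℓ) (S := S) h
    rw [hq, ZMod.natCast_eq_natCast_iff] at hpar
    have h3 : ℓ % 2 = q % 2 := hpar
    rw [Nat.odd_iff] at hodd
    clear h hpar
    omega
  · intro heven
    obtain ⟨k, hk⟩ := heven
    have hk2 : q + 2*k = ℓ := by omega
    have h2 : (ℓ - q)/2 = k := by omega
    rw [h2]
    exact main_bound m ℓ q k S hq hk2
end

section
/- Let E = {(p_i, |ψ_i⟩)}_{i∈[m]} be an ensemble of pure states with Σp_i = 1, let |ψ'_i⟩ = √p_i |ψ_i⟩, ρ = Σ_i |ψ'_i⟩⟨ψ'_i|, and define the Pretty Good Measurement vectors |ν_i⟩ = ρ^{−1/2}|ψ'_i⟩ (inverse on the support of ρ). Then the optimal average success probability P^opt(E) of identifying the state over all POVMs satisfies P^opt(E)² ≤ P^{PGM}(E), where P^{PGM}(E) = Σ_i p_i |⟨ν_i|ψ_i⟩|² = Σ_i ⟨ψ'_i|ρ^{−1/2}|ψ'_i⟩². -/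
open Matrix
open scoped ComplexOrder

variable {n : ℕ}

lemma pgm_psd_vecMulVec (v : Fin n → ℂ) : (vecMulVec v (star v)).PosSemidef := by
  refine posSemidef_iff_dotProduct_mulVec.mpr ⟨?_, ?_⟩
  · ext i j
    simp [conjTranspose_apply, vecMulVec_apply, mul_comm]
  · intro x
    have : star x ⬝ᵥ (vecMulVec v (star v)) *ᵥ x = (star x ⬝ᵥ v) * star (star x ⬝ᵥ v) := by
      simp only [dotProduct, mulVec, vecMulVec_apply, star_sum, star_mul']
      simp only [Finset.mul_sum, Finset.sum_mul]
      rw [Finset.sum_comm]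
      congr 1; ext i; congr 1; ext j
      simp [Pi.star_apply, star_star]
      ring
    rw [this]
    exact mul_star_self_nonneg _

lemma pgm_trace_mul_vecMulVec (A : Matrix (Fin n) (Fin n) ℂ) (v : Fin n → ℂ) :
    (A * vecMulVec v (star v)).trace = star v ⬝ᵥ A *ᵥ v := by
  simp only [trace, diag, mul_apply, vecMulVec_apply, dotProduct, mulVec, Pi.star_apply]
  congr 1; ext j
  rw [Finset.mul_sum]
  congr 1; ext i
  ring

lemma pgm_trace_nonneg {A : Matrix (Fin n) (Fin n) ℂ} (hA : A.PosSemidef) :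
    0 ≤ A.trace := by
  rw [trace]
  apply Finset.sum_nonneg
  intro j _
  have := hA.dotProduct_mulVec_nonneg (Pi.single j 1)
  simpa [dotProduct, mulVec, Pi.single_apply] using this

open scoped MatrixOrder in
lemma pgm_trace_mul_nonneg {A B : Matrix (Fin n) (Fin n) ℂ}
    (hA : A.PosSemidef) (hB : B.PosSemidef) : 0 ≤ (A * B).trace := by
  have h1 : A = CFC.sqrt A * CFC.sqrt A := (CFC.sqrt_mul_sqrt_self A hA.nonneg).symm
  calc (0:ℂ) ≤ (CFC.sqrt A * B * (CFC.sqrt A)ᴴ).trace := pgm_trace_nonneg (hB.mul_mul_conjTranspose_same _)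
  _ = (A * B).trace := by
      rw [(CFC.sqrt_nonneg A).posSemidef.1]
      rw [show CFC.sqrt A * B * CFC.sqrt A = CFC.sqrt A * (B * CFC.sqrt A) by rw [mul_assoc]]
      rw [trace_mul_comm, mul_assoc, ← h1, trace_mul_comm]



lemma pgm_contOn (A : Matrix (Fin n) (Fin n) ℂ) (f : ℝ → ℝ) :
    ContinuousOn f (spectrum ℝ A) := by
  rw [continuousOn_iff_continuous_restrict]
  exact continuous_of_discreteTopology

lemma pgm_cfc_psd {ρ : Matrix (Fin n) (Fin n) ℂ} (hρ : ρ.PosSemidef)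
    (f : ℝ → ℝ) (hf : ∀ x, 0 ≤ f x) : (cfc f ρ).PosSemidef := by
  rw [hρ.1.cfc_eq]
  unfold Matrix.IsHermitian.cfc
  have hd : (diagonal (RCLike.ofReal ∘ f ∘ hρ.1.eigenvalues) :
      Matrix (Fin n) (Fin n) ℂ).PosSemidef := by
    rw [posSemidef_diagonal_iff]
    intro i
    simp only [Function.comp_apply]
    exact RCLike.ofReal_nonneg.mpr (hf _)
  have := hd.mul_mul_conjTranspose_same (hρ.1.eigenvectorUnitary : Matrix (Fin n) (Fin n) ℂ)
  rwa [← star_eq_conjTranspose] at this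

lemma pgm_pinv_unique (ρ X Y : Matrix (Fin n) (Fin n) ℂ)
    (hρ : ρᴴ = ρ) (hX : Xᴴ = X) (hY : Yᴴ = Y)
    (hXc : X * ρ = ρ * X) (hYc : Y * ρ = ρ * Y)
    (h1 : ρ * X * ρ = ρ) (h2 : X * ρ * X = X)
    (h3 : ρ * Y * ρ = ρ) (h4 : Y * ρ * Y = Y) : X = Y := by
  have hρX : (ρ * X)ᴴ = ρ * X := by rw [conjTranspose_mul, hX, hρ, hXc]
  have hρY : (ρ * Y)ᴴ = ρ * Y := by rw [conjTranspose_mul, hY, hρ, hYc]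
  have e1 : ρ * X = (ρ * Y) * (ρ * X) := by
    conv_lhs => rw [show ρ * X = (ρ * Y * ρ) * X by rw [h3]]
    rw [mul_assoc]
  have e2 : ρ * Y = (ρ * X) * (ρ * Y) := by
    conv_lhs => rw [show ρ * Y = (ρ * X * ρ) * Y by rw [h1]]
    rw [mul_assoc]
  have e3 : ρ * X = ρ * Y := by
    have h5 : ρ * X = (ρ * X) * (ρ * Y) := by
      conv_lhs => rw [← hρX, e1, conjTranspose_mul, hρX, hρY]
    rw [h5, ← e2]
  calc X = X * ρ * X := h2.symm
    _ = X * (ρ * X) := by rw [mul_assoc]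
    _ = X * (ρ * Y) := by rw [e3]
    _ = (X * ρ) * Y := by rw [mul_assoc]
    _ = (ρ * Y) * Y := by rw [hXc, e3]
    _ = (Y * ρ) * Y := by rw [hYc]
    _ = Y := h4

lemma pgm_cfc_facts (ρ R : Matrix (Fin n) (Fin n) ℂ) (hρPSD : ρ.PosSemidef) (hR : R.PosSemidef)
    (hRρ : R * ρ = ρ * R) (hpinv1 : ρ * (R * R) * ρ = ρ) (hpinv2 : (R * R) * ρ * (R * R) = R * R) :
    ∃ S T : Matrix (Fin n) (Fin n) ℂ, Sᴴ = S ∧ Tᴴ = T ∧ T * T = S ∧ S * S = ρ ∧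
      R * S * R = R ∧ (S * R) * ρ = ρ ∧ (S * R)ᴴ = S * R := by
  have hsa : IsSelfAdjoint ρ := hρPSD.1
  have hid : cfc (id : ℝ → ℝ) ρ = ρ := cfc_id ℝ ρ hsa
  have hspec : ∀ x ∈ spectrum ℝ ρ, 0 ≤ x := by
    rw [hρPSD.1.spectrum_real_eq_range_eigenvalues]
    rintro x ⟨i, rfl⟩
    exact hρPSD.eigenvalues_nonneg i
  have mulc : ∀ f₁ f₂ : ℝ → ℝ, cfc f₁ ρ * cfc f₂ ρ = cfc (fun x => f₁ x * f₂ x) ρ :=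
    fun f₁ f₂ => (cfc_mul f₁ f₂ ρ (pgm_contOn ρ f₁) (pgm_contOn ρ f₂)).symm
  set f : ℝ → ℝ := fun x => (Real.sqrt x)⁻¹ with hf
  set s : ℝ → ℝ := Real.sqrt with hs
  set t : ℝ → ℝ := fun x => Real.sqrt (Real.sqrt x) with ht
  set g : ℝ → ℝ := fun x => x⁻¹ with hg
  -- Y = cfc g ρ is the pseudoinverse of ρ
  have hρYρ : ρ * cfc g ρ * ρ = ρ := by
    calc ρ * cfc g ρ * ρ = cfc (id : ℝ → ℝ) ρ * cfc g ρ * cfc (id : ℝ → ℝ) ρ := by rw [hid]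
      _ = cfc (fun x => (id x * g x) * id x) ρ := by rw [mulc, mulc]
      _ = cfc (id : ℝ → ℝ) ρ := by
          apply cfc_congr; intro x _
          rcases eq_or_ne x 0 with h | h
          · simp [g, h]
          · simp only [g, id]
            field_simp
      _ = ρ := hid
  have hYρY : cfc g ρ * ρ * cfc g ρ = cfc g ρ := by
    calc cfc g ρ * ρ * cfc g ρ = cfc g ρ * cfc (id : ℝ → ℝ) ρ * cfc g ρ := by rw [hid]
      _ = cfc (fun x => (g x * id x) * g x) ρ := by rw [mulc, mulc]
      _ = cfc g ρ := by
          apply cfc_congr; intro x _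
          rcases eq_or_ne x 0 with h | h
          · simp [g, h]
          · simp only [g, id]
            field_simp
  have hYH : (cfc g ρ)ᴴ = cfc g ρ := (cfc_predicate g ρ : IsSelfAdjoint _)
  have hYc : cfc g ρ * ρ = ρ * cfc g ρ := by
    have := cfc_commute_cfc g id ρ
    rw [hid] at this
    exact this
  have hRRH : (R * R)ᴴ = R * R := by rw [conjTranspose_mul, hR.1]
  have hRRc : (R * R) * ρ = ρ * (R * R) := by
    rw [mul_assoc, hRρ, ← mul_assoc, hRρ, mul_assoc]
  have hRRY : R * R = cfc g ρ :=
    pgm_pinv_unique ρ (R * R) (cfc g ρ) hρPSD.1 hRRH hYH hRRc hYc hpinv1 hpinv2 hρYρ hYρY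
  have hFF : cfc f ρ * cfc f ρ = cfc g ρ := by
    rw [mulc]
    apply cfc_congr
    intro x hx
    have hx0 := hspec x hx
    simp only [f, g]
    rw [← mul_inv, Real.mul_self_sqrt hx0]
  have hFPSD : (cfc f ρ).PosSemidef :=
    pgm_cfc_psd hρPSD f (fun x => inv_nonneg.mpr (Real.sqrt_nonneg x))
  have hRF : R = cfc f ρ := by
    refine (open scoped MatrixOrder in (CFC.sq_eq_sq_iff R (cfc f ρ) hR.nonneg hFPSD.nonneg).mp) ?_
    rw [pow_two, pow_two, hFF, hRRY]
  have hSH : (cfc s ρ)ᴴ = cfc s ρ := (cfc_predicate s ρ : IsSelfAdjoint _)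
  have hTH : (cfc t ρ)ᴴ = cfc t ρ := (cfc_predicate t ρ : IsSelfAdjoint _)
  have hTT : cfc t ρ * cfc t ρ = cfc s ρ := by
    rw [mulc]
    congr 1
    funext x
    exact Real.mul_self_sqrt (Real.sqrt_nonneg x)
  have hSS : cfc s ρ * cfc s ρ = ρ := by
    calc cfc s ρ * cfc s ρ = cfc (fun x => s x * s x) ρ := mulc _ _
      _ = cfc (id : ℝ → ℝ) ρ := by
          apply cfc_congr; intro x hx
          exact Real.mul_self_sqrt (hspec x hx)
      _ = ρ := hid
  have hRSR : R * cfc s ρ * R = R := by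
    rw [hRF, mul_assoc, mulc, mulc]
    apply cfc_congr
    intro x _
    rcases eq_or_ne (Real.sqrt x) 0 with h | h
    · simp [f, s, h]
    · simp only [f, s]
      field_simp
  have hSRρ : (cfc s ρ * R) * ρ = ρ := by
    calc (cfc s ρ * R) * ρ = cfc (fun x => s x * f x) ρ * cfc (id : ℝ → ℝ) ρ := by
          rw [hRF, mulc, hid]
      _ = cfc (fun x => (s x * f x) * id x) ρ := mulc _ _
      _ = cfc (id : ℝ → ℝ) ρ := by
          apply cfc_congr; intro x hx
          rcases eq_or_ne x 0 with h | h
          · simp [f, s, h]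
          · have hsx : Real.sqrt x ≠ 0 := by
              intro h0
              rcases (hspec x hx).lt_or_eq with h1 | h1
              · exact (Real.sqrt_pos.mpr h1).ne' h0
              · exact h h1.symm
            simp only [f, s, id]
            field_simp
      _ = ρ := hid
  have hSRH : (cfc s ρ * R)ᴴ = cfc s ρ * R := by
    rw [hRF, mulc]
    exact (cfc_predicate (fun x => s x * f x) ρ : IsSelfAdjoint _)
  exact ⟨cfc s ρ, cfc t ρ, hSH, hTH, hTT, hSS, hRSR, hSRρ, hSRH⟩

lemma pgm_conj_dot (A Mm : Matrix (Fin n) (Fin n) ℂ) (x y : Fin n → ℂ) :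
    star (A *ᵥ x) ⬝ᵥ Mm *ᵥ (A *ᵥ y) = star x ⬝ᵥ (Aᴴ * Mm * A) *ᵥ y := by
  rw [star_mulVec, mulVec_mulVec, dotProduct_mulVec, vecMul_vecMul, ← dotProduct_mulVec,
    ← mul_assoc]

lemma pgm_conj_dot' (A : Matrix (Fin n) (Fin n) ℂ) (x y : Fin n → ℂ) :
    star (A *ᵥ x) ⬝ᵥ (A *ᵥ y) = star x ⬝ᵥ (Aᴴ * A) *ᵥ y := by
  rw [star_mulVec, dotProduct_mulVec, vecMul_vecMul, ← dotProduct_mulVec]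

lemma pgm_psd_sum {ι : Type*} (s : Finset ι) (f : ι → Matrix (Fin n) (Fin n) ℂ)
    (h : ∀ i ∈ s, (f i).PosSemidef) : (∑ i ∈ s, f i).PosSemidef := by
  classical
  induction s using Finset.induction with
  | empty => simpa using (Matrix.PosSemidef.zero : (0 : Matrix (Fin n) (Fin n) ℂ).PosSemidef)
  | @insert a s ha ih =>
    rw [Finset.sum_insert ha]
    exact (h a (Finset.mem_insert_self a s)).add (ih fun i hi => h i (Finset.mem_insert_of_mem hi))

lemma pgm_re_nonneg {z : ℂ} (h : 0 ≤ z) : 0 ≤ z.re := by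
  simpa using (Complex.le_def.mp h).1

/-- Pretty Good Measurement achieves at least the square of the optimal success
probability.  Here `ψ i` are unit vectors, `p i` probabilities,
`ρ = Σ_i p_i |ψ_i⟩⟨ψ_i|`, and `R = ρ^{-1/2}` (inverse on the support of `ρ`),
characterized by: `R` is positive semidefinite, commutes with `ρ`, and `R²` is the
Moore–Penrose pseudoinverse of `ρ` (`ρ R² ρ = ρ` and `R² ρ R² = R²`).  For every POVM
`{M_i}` (each `M_i` psd, `Σ_i M_i = 1`), the average success probability
`Σ_i p_i ⟨ψ_i|M_i|ψ_i⟩` satisfies `(Σ_i p_i ⟨ψ_i|M_i|ψ_i⟩)² ≤ P^PGM`, where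
`P^PGM = Σ_i (p_i ⟨ψ_i|R|ψ_i⟩)² = Σ_i ⟨ψ'_i|R|ψ'_i⟩²`.  Taking the supremum over all
POVMs gives `P^opt(E)² ≤ P^PGM(E)`. -/
theorem pgm_success_ge_sq_opt {n m : ℕ}
    (p : Fin m → ℝ) (hp : ∀ i, 0 ≤ p i) (hp1 : ∑ i, p i = 1)
    (ψ : Fin m → (Fin n → ℂ)) (hψ : ∀ i, star (ψ i) ⬝ᵥ ψ i = 1)
    (ρ : Matrix (Fin n) (Fin n) ℂ)
    (hρ : ρ = ∑ i, (p i : ℂ) • Matrix.vecMulVec (ψ i) (star (ψ i)))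
    (R : Matrix (Fin n) (Fin n) ℂ)
    (hR : R.PosSemidef) (hRρ : R * ρ = ρ * R)
    (hpinv1 : ρ * (R * R) * ρ = ρ) (hpinv2 : (R * R) * ρ * (R * R) = R * R)
    (M : Fin m → Matrix (Fin n) (Fin n) ℂ)
    (hM : ∀ i, (M i).PosSemidef) (hMsum : ∑ i, M i = 1) :
    (∑ i, p i * (star (ψ i) ⬝ᵥ (M i).mulVec (ψ i)).re) ^ 2
      ≤ ∑ i, (p i * (star (ψ i) ⬝ᵥ R.mulVec (ψ i)).re) ^ 2 := by
  classical
  set ψ' : Fin m → (Fin n → ℂ) := fun i => ((Real.sqrt (p i) : ℝ) : ℂ) • ψ i with hψ'def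
  have hkey : ∀ (i : Fin m) (A : Matrix (Fin n) (Fin n) ℂ),
      star (ψ' i) ⬝ᵥ A *ᵥ ψ' i = (p i : ℂ) * (star (ψ i) ⬝ᵥ A *ᵥ ψ i) := by
    intro i A
    simp only [hψ'def, star_smul, smul_dotProduct, mulVec_smul, dotProduct_smul, smul_eq_mul,
      Complex.star_def, Complex.conj_ofReal]
    rw [← mul_assoc, ← Complex.ofReal_mul, Real.mul_self_sqrt (hp i)]
  have hρ' : ρ = ∑ i, vecMulVec (ψ' i) (star (ψ' i)) := by
    rw [hρ]
    apply Finset.sum_congr rfl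
    intro i _
    have hcc : ((Real.sqrt (p i) : ℝ) : ℂ) * ((Real.sqrt (p i) : ℝ) : ℂ) = ((p i : ℝ) : ℂ) := by
      rw [← Complex.ofReal_mul, Real.mul_self_sqrt (hp i)]
    ext j k
    simp only [Matrix.smul_apply, vecMulVec_apply, Pi.smul_apply, Pi.star_apply, smul_eq_mul,
      hψ'def, Complex.star_def, _root_.map_mul, Complex.conj_ofReal]
    linear_combination (-(ψ i j * (starRingEnd ℂ) (ψ i k))) * hcc
  have hρPSD : ρ.PosSemidef := by
    rw [hρ']
    exact pgm_psd_sum _ _ (fun i _ => pgm_psd_vecMulVec (ψ' i))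
  obtain ⟨S, T, hSH, hTH, hTT, hSS, hRSR, hSRρ, hSRH⟩ :=
    pgm_cfc_facts ρ R hρPSD hR hRρ hpinv1 hpinv2
  -- (S * R) acts as identity on each ψ' i
  have hQψ : ∀ i, (S * R) *ᵥ ψ' i = ψ' i := by
    have hGρ : (((1 - S * R)ᴴ * (1 - S * R)) * ρ) = 0 := by
      have h1 : (1 - S * R) * ρ = 0 := by rw [sub_mul, one_mul, hSRρ, sub_self]
      rw [mul_assoc, h1, mul_zero]
    have hsum : ∑ i, (star ((1 - S * R) *ᵥ ψ' i) ⬝ᵥ ((1 - S * R) *ᵥ ψ' i)) = 0 := by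
      have heach : ∀ i, star ((1 - S * R) *ᵥ ψ' i) ⬝ᵥ ((1 - S * R) *ᵥ ψ' i)
          = (((1 - S * R)ᴴ * (1 - S * R)) * vecMulVec (ψ' i) (star (ψ' i))).trace := by
        intro i
        rw [pgm_trace_mul_vecMulVec, pgm_conj_dot']
      rw [Finset.sum_congr rfl (fun i _ => heach i), ← Matrix.trace_sum, ← Finset.mul_sum,
        ← hρ', hGρ, trace_zero]
    intro i
    have hnn : ∀ j ∈ Finset.univ, (0:ℂ) ≤ star ((1 - S * R) *ᵥ ψ' j) ⬝ᵥ ((1 - S * R) *ᵥ ψ' j) :=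
      fun j _ => Finset.sum_nonneg fun k _ => by
        simpa [dotProduct] using star_mul_self_nonneg (((1 - S * R) *ᵥ ψ' j) k)
    have hterm := (Finset.sum_eq_zero_iff_of_nonneg hnn).mp hsum i (Finset.mem_univ i)
    have hv0 : (1 - S * R) *ᵥ ψ' i = 0 := dotProduct_star_self_eq_zero.mp hterm
    have h2 : ψ' i - (S * R) *ᵥ ψ' i = 0 := by
      rw [← hv0, sub_mulVec, one_mulVec]
    exact (sub_eq_zero.mp h2).symm
  -- auxiliary vectors and matrices
  set w : Fin m → (Fin n → ℂ) := fun i => (T * R) *ᵥ ψ' i with hwdef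
  set B : Fin m → Matrix (Fin n) (Fin n) ℂ := fun i => T * M i * T with hBdef
  have hψ'T : ∀ i, ψ' i = T *ᵥ w i := by
    intro i
    rw [hwdef]
    simp only
    rw [mulVec_mulVec, ← mul_assoc, hTT, hQψ i]
  have ha_eq : ∀ i, star (ψ' i) ⬝ᵥ (M i) *ᵥ ψ' i = star (w i) ⬝ᵥ (B i) *ᵥ w i := by
    intro i
    conv_lhs => rw [hψ'T i]
    rw [pgm_conj_dot, hTH, hBdef]
  have hb_eq : ∀ i, star (w i) ⬝ᵥ w i = star (ψ' i) ⬝ᵥ R *ᵥ ψ' i := by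
    intro i
    rw [hwdef]
    simp only
    rw [pgm_conj_dot']
    have e1 : (T * R)ᴴ * (T * R) = R * S * R := by
      rw [conjTranspose_mul, hTH, hR.1, ← hTT]
      noncomm_ring
    rw [e1, hRSR]
  -- real quantities
  set a : Fin m → ℝ := fun i => (star (ψ' i) ⬝ᵥ (M i) *ᵥ ψ' i).re with hadef
  set b : Fin m → ℝ := fun i => (star (ψ' i) ⬝ᵥ R *ᵥ ψ' i).re with hbdef
  set β : Fin m → ℝ := fun i =>
    Real.sqrt (∑ jk : Fin n × Fin n, ‖(B i) jk.1 jk.2‖ ^ 2) with hβdef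
  have hb2 : ∀ i, b i = ∑ j, ‖w i j‖ ^ 2 := by
    intro i
    rw [hbdef]
    simp only
    rw [← hb_eq i]
    simp only [dotProduct, Pi.star_apply, Complex.re_sum]
    apply Finset.sum_congr rfl
    intro j _
    rw [Complex.star_def, mul_comm, Complex.mul_conj]
    simp [Complex.normSq_eq_norm_sq, ← Complex.ofReal_pow]
  have hb_nn : ∀ i, 0 ≤ b i := by
    intro i
    rw [hb2 i]
    positivity
  have hβ_nn : ∀ i, 0 ≤ β i := fun i => Real.sqrt_nonneg _
  have ha_nn : ∀ i, 0 ≤ a i := fun i => pgm_re_nonneg ((hM i).dotProduct_mulVec_nonneg (ψ' i))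
  -- per-i Cauchy-Schwarz
  have h4 : ∀ i, a i ≤ β i * b i := by
    intro i
    have e1 : a i = (star (w i) ⬝ᵥ (B i) *ᵥ w i).re := by rw [hadef]; simp only; rw [ha_eq i]
    have e2 : (star (w i) ⬝ᵥ (B i) *ᵥ w i).re
        ≤ ∑ jk : Fin n × Fin n, ‖(B i) jk.1 jk.2‖
            * (‖w i jk.1‖ * ‖w i jk.2‖) := by
      rw [Fintype.sum_prod_type]
      simp only [dotProduct, mulVec, Pi.star_apply, Complex.re_sum]
      refine Finset.sum_le_sum (fun j _ => ?_)
      rw [Finset.mul_sum, Complex.re_sum]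
      refine Finset.sum_le_sum (fun k _ => ?_)
      calc (star (w i j) * ((B i) j k * w i k)).re
          ≤ ‖star (w i j) * ((B i) j k * w i k)‖ := Complex.re_le_norm _
        _ = ‖(B i) j k‖ * (‖w i j‖ * ‖w i k‖) := by
            rw [norm_mul, norm_mul, Complex.star_def, Complex.norm_conj]
            ring
    have e3 := Finset.sum_mul_sq_le_sq_mul_sq Finset.univ
      (fun jk : Fin n × Fin n => ‖(B i) jk.1 jk.2‖)
      (fun jk : Fin n × Fin n => ‖w i jk.1‖ * ‖w i jk.2‖)
    have e4 : ∑ jk : Fin n × Fin n, (‖w i jk.1‖ * ‖w i jk.2‖) ^ 2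
        = (b i) ^ 2 := by
      rw [hb2 i, Fintype.sum_prod_type]
      simp only [mul_pow]
      rw [← Finset.sum_mul_sum]
      ring
    have hβsq : β i ^ 2 = ∑ jk : Fin n × Fin n, ‖(B i) jk.1 jk.2‖ ^ 2 := by
      rw [hβdef]
      simp only
      rw [Real.sq_sqrt (by positivity)]
    have hX0 : (0:ℝ) ≤ ∑ jk : Fin n × Fin n, ‖(B i) jk.1 jk.2‖
        * (‖w i jk.1‖ * ‖w i jk.2‖) := by positivity
    have e5 : (∑ jk : Fin n × Fin n, ‖(B i) jk.1 jk.2‖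
        * (‖w i jk.1‖ * ‖w i jk.2‖)) ^ 2 ≤ (β i * b i) ^ 2 := by
      calc _ ≤ _ := e3
        _ = (β i * b i) ^ 2 := by rw [e4, ← hβsq]; ring
    have e6 : (∑ jk : Fin n × Fin n, ‖(B i) jk.1 jk.2‖
        * (‖w i jk.1‖ * ‖w i jk.2‖)) ≤ β i * b i := by
      have h' := Real.sqrt_le_sqrt e5
      rwa [Real.sqrt_sq hX0, Real.sqrt_sq (mul_nonneg (hβ_nn i) (hb_nn i))] at h'
    calc a i = _ := e1
      _ ≤ _ := e2
      _ ≤ β i * b i := e6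
  -- bound on ∑ β i ^ 2
  have hBH : ∀ i, (B i)ᴴ = B i := by
    intro i
    rw [hBdef]
    simp only
    rw [conjTranspose_mul, conjTranspose_mul, hTH, (hM i).1, mul_assoc]
  have h5i : ∀ i, β i ^ 2 ≤ ((M i * ρ).trace).re := by
    intro i
    have hβsq : β i ^ 2 = ∑ jk : Fin n × Fin n, ‖(B i) jk.1 jk.2‖ ^ 2 := by
      rw [hβdef]; simp only; rw [Real.sq_sqrt (by positivity)]
    have htr : ((B i * B i).trace).re = ∑ jk : Fin n × Fin n, ‖(B i) jk.1 jk.2‖ ^ 2 := by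
      simp only [trace, diag, mul_apply, Fintype.sum_prod_type, Complex.re_sum]
      apply Finset.sum_congr rfl
      intro j _
      apply Finset.sum_congr rfl
      intro k _
      have hkj : (B i) k j = star ((B i) j k) := by
        conv_lhs => rw [← hBH i]
        rw [conjTranspose_apply]
      rw [hkj, Complex.star_def, Complex.mul_conj]
      simp [Complex.normSq_eq_norm_sq, ← Complex.ofReal_pow]
    have hswap : (B i * B i).trace = (S * (M i * S * M i)).trace := by
      have e : B i * B i = T * (M i * S * M i) * T := by
        rw [hBdef]
        simp only
        rw [← hTT]
        noncomm_ring
      rw [e, trace_mul_comm, ← mul_assoc, hTT]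
    have hps1 : (S * M i * S).PosSemidef := by
      have := (hM i).mul_mul_conjTranspose_same S
      rwa [hSH] at this
    have hps2 : ((1 : Matrix (Fin n) (Fin n) ℂ) - M i).PosSemidef := by
      have e : (1 : Matrix (Fin n) (Fin n) ℂ) - M i = ∑ j ∈ Finset.univ.erase i, M j := by
        rw [← hMsum, ← Finset.sum_erase_add Finset.univ M (Finset.mem_univ i),
          add_sub_cancel_right]
      rw [e]
      exact pgm_psd_sum _ _ (fun j _ => hM j)
    have hpos : (0:ℂ) ≤ ((S * M i * S) * (1 - M i)).trace := pgm_trace_mul_nonneg hps1 hps2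
    have hexp : ((S * M i * S) * (1 - M i)).trace
        = (M i * ρ).trace - (S * (M i * S * M i)).trace := by
      have e1 : (S * M i * S) * (1 - M i) = S * M i * S - S * (M i * S * M i) := by
        rw [mul_sub, mul_one]
        congr 1
        noncomm_ring
      rw [e1, trace_sub]
      congr 1
      calc (S * M i * S).trace = (S * (S * M i)).trace := trace_mul_comm _ _
        _ = (ρ * M i).trace := by rw [← mul_assoc, hSS]
        _ = (M i * ρ).trace := trace_mul_comm _ _
    have hle : (S * (M i * S * M i)).trace ≤ (M i * ρ).trace := by
      rw [hexp] at hpos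
      exact sub_nonneg.mp hpos
    calc β i ^ 2 = ((B i * B i).trace).re := by rw [hβsq, htr]
      _ = ((S * (M i * S * M i)).trace).re := by rw [hswap]
      _ ≤ ((M i * ρ).trace).re := (Complex.le_def.mp hle).1
  have h5 : ∑ i, β i ^ 2 ≤ 1 := by
    have htrρ : ((ρ.trace) : ℂ).re = 1 := by
      rw [hρ', trace_sum, Complex.re_sum]
      have heach : ∀ i, ((vecMulVec (ψ' i) (star (ψ' i))).trace).re = p i := by
        intro i
        have e : (vecMulVec (ψ' i) (star (ψ' i))).trace = star (ψ' i) ⬝ᵥ ψ' i := by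
          simp only [trace, diag, vecMulVec_apply, dotProduct, Pi.star_apply]
          exact Finset.sum_congr rfl (fun j _ => mul_comm _ _)
        have e2 := hkey i 1
        rw [one_mulVec, one_mulVec] at e2
        rw [e, e2, hψ i, mul_one]
        simp
      rw [Finset.sum_congr rfl (fun i _ => heach i), hp1]
    calc ∑ i, β i ^ 2 ≤ ∑ i, ((M i * ρ).trace).re := Finset.sum_le_sum (fun i _ => h5i i)
      _ = ((∑ i, M i * ρ).trace).re := by rw [trace_sum, Complex.re_sum]
      _ = ((ρ : Matrix (Fin n) (Fin n) ℂ).trace).re := by rw [← Finset.sum_mul, hMsum, one_mul]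
      _ = 1 := htrρ
  -- final assembly
  have hLHS : ∀ i, p i * (star (ψ i) ⬝ᵥ (M i).mulVec (ψ i)).re = a i := by
    intro i
    rw [hadef]
    simp only
    rw [hkey i (M i)]
    simp [Complex.mul_re]
  have hRHS : ∀ i, p i * (star (ψ i) ⬝ᵥ R.mulVec (ψ i)).re = b i := by
    intro i
    rw [hbdef]
    simp only
    rw [hkey i R]
    simp [Complex.mul_re]
  rw [Finset.sum_congr rfl (fun i _ => hLHS i)]
  have hRHS' : ∑ i, (p i * (star (ψ i) ⬝ᵥ R.mulVec (ψ i)).re) ^ 2 = ∑ i, b i ^ 2 := by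
    apply Finset.sum_congr rfl
    intro i _
    rw [hRHS i]
  rw [hRHS']
  have step1 : ∑ i, a i ≤ ∑ i, β i * b i := Finset.sum_le_sum (fun i _ => h4 i)
  have step2 : (∑ i, β i * b i) ^ 2 ≤ (∑ i, β i ^ 2) * (∑ i, b i ^ 2) :=
    Finset.sum_mul_sq_le_sq_mul_sq Finset.univ β b
  have h0a : 0 ≤ ∑ i, a i := Finset.sum_nonneg (fun i _ => ha_nn i)
  calc (∑ i, a i) ^ 2 ≤ (∑ i, β i * b i) ^ 2 := pow_le_pow_left₀ h0a step1 2
    _ ≤ (∑ i, β i ^ 2) * (∑ i, b i ^ 2) := step2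
    _ ≤ 1 * (∑ i, b i ^ 2) :=
        mul_le_mul_of_nonneg_right h5 (Finset.sum_nonneg (fun i _ => sq_nonneg _))
    _ = ∑ i, b i ^ 2 := one_mul _
end

section
/- Let E = {(p_i, |ψ_i⟩)}_{i∈[m]} be an ensemble of pure states, |ψ'_i⟩ = √p_i|ψ_i⟩, and G the m×m Gram matrix with G(i,j) = ⟨ψ'_i|ψ'_j⟩. Then the average success probability of the Pretty Good Measurement equals Σ_{i∈[m]} (√G)(i,i)², where √G is the positive semidefinite square root of G. -/
open Matrix
open scoped ComplexOrder

noncomputable def Matrix.PosSemidef.sqrt {n : Type*} {𝕜 : Type*} [Fintype n] [DecidableEq n]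
    [RCLike 𝕜] {A : Matrix n n 𝕜} (hA : A.PosSemidef) : Matrix n n 𝕜 :=
  hA.1.eigenvectorUnitary.1 * diagonal ((↑) ∘ (√·) ∘ hA.1.eigenvalues) *
    (star hA.1.eigenvectorUnitary : Matrix n n 𝕜)

open scoped MatrixOrder in
theorem pgm_aux_eq_sqrt {m : ℕ} {G S : Matrix (Fin m) (Fin m) ℂ} (hS : S.PosSemidef)
    (hG : G.PosSemidef) (h : S ^ 2 = G) : S = hG.sqrt := by
  have h1 : CFC.sqrt G = S := CFC.sqrt_unique (by rw [← h, sq]) hS.nonneg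
  rw [← h1, CFC.sqrt_eq_cfc, cfc_nnreal_eq_real _ G hG.nonneg, hG.1.cfc_eq]
  simp only [IsHermitian.cfc, Matrix.PosSemidef.sqrt]
  simp [Function.comp_def, hG.eigenvalues_nonneg]

/-- The average success probability of the Pretty Good Measurement equals
`Σ_i (√G)(i,i)²`, where `G(i,j) = ⟨ψ'_i|ψ'_j⟩` is the Gram matrix of the
renormalized states `|ψ'_i⟩ = √p_i |ψ_i⟩`.  Here `ρ = Σ_i |ψ'_i⟩⟨ψ'_i|` and
`R = ρ^{-1/2}` (inverse square root on the support, characterized as the psd matrix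
commuting with `ρ` whose square is the Moore–Penrose pseudoinverse of `ρ`), so that
`P^PGM = Σ_i p_i |⟨ν_i|ψ_i⟩|² = Σ_i ⟨ψ'_i|R|ψ'_i⟩²` with `|ν_i⟩ = R|ψ'_i⟩`. -/
theorem pgm_success_eq_sum_sqrt_gram_diag_sq {n m : ℕ}
    (p : Fin m → ℝ) (hp : ∀ i, 0 ≤ p i) (hp1 : ∑ i, p i = 1)
    (ψ : Fin m → (Fin n → ℂ)) (hψ : ∀ i, star (ψ i) ⬝ᵥ ψ i = 1)
    (ρ : Matrix (Fin n) (Fin n) ℂ)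
    (hρ : ρ = ∑ i, (p i : ℂ) • Matrix.vecMulVec (ψ i) (star (ψ i)))
    (R : Matrix (Fin n) (Fin n) ℂ)
    (hR : R.PosSemidef) (hRρ : R * ρ = ρ * R)
    (hpinv1 : ρ * (R * R) * ρ = ρ) (hpinv2 : (R * R) * ρ * (R * R) = R * R)
    (G : Matrix (Fin m) (Fin m) ℂ)
    (hGdef : ∀ i j, G i j = (Real.sqrt (p i) * Real.sqrt (p j) : ℂ) * (star (ψ i) ⬝ᵥ ψ j))
    (hG : G.PosSemidef) :
    ∑ i, (p i * (star (ψ i) ⬝ᵥ R.mulVec (ψ i)).re) ^ 2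
      = ∑ i, (hG.sqrt i i).re ^ 2 := by
  classical
  -- the matrix whose columns are the renormalized states
  set B : Matrix (Fin n) (Fin m) ℂ :=
    Matrix.of (fun k j => (Real.sqrt (p j) : ℂ) * ψ j k) with hB
  have hsq : ∀ j, ((Real.sqrt (p j) : ℂ)) * ((Real.sqrt (p j) : ℂ)) = (p j : ℂ) := by
    intro j; rw [← Complex.ofReal_mul, Real.mul_self_sqrt (hp j)]
  have hBB : B * Bᴴ = ρ := by
    ext k l
    rw [hρ]
    simp only [Matrix.mul_apply, Matrix.conjTranspose_apply, Matrix.sum_apply,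
      Matrix.smul_apply, Matrix.vecMulVec_apply, hB, Matrix.of_apply, Pi.star_apply,
      smul_eq_mul, star_mul', Complex.star_def, Complex.conj_ofReal]
    refine Finset.sum_congr rfl fun j _ => ?_
    rw [← hsq j]
    ring
  have hBtB : Bᴴ * B = G := by
    ext i j
    rw [hGdef i j]
    simp only [Matrix.mul_apply, Matrix.conjTranspose_apply, hB, Matrix.of_apply,
      dotProduct, Pi.star_apply, star_mul', Complex.star_def, Complex.conj_ofReal,
      Complex.ofReal_mul, Finset.mul_sum]
    refine Finset.sum_congr rfl fun k _ => ?_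
    ring
  have hρherm : ρᴴ = ρ := by
    rw [← hBB, Matrix.conjTranspose_mul, Matrix.conjTranspose_conjTranspose]
  have hRherm : Rᴴ = R := hR.1
  -- R² commutes with ρ
  have hcomm : R * R * ρ = ρ * (R * R) := by
    calc R * R * ρ = R * (R * ρ) := by rw [mul_assoc]
    _ = R * (ρ * R) := by rw [hRρ]
    _ = (R * ρ) * R := by rw [mul_assoc]
    _ = ρ * R * R := by rw [hRρ]
    _ = ρ * (R * R) := by rw [mul_assoc]
  have hQherm : (R * R * ρ)ᴴ = R * R * ρ := by
    rw [Matrix.conjTranspose_mul, Matrix.conjTranspose_mul, hρherm, hRherm, hcomm]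
  have hQρ : (R * R * ρ) * ρ = ρ := by
    rw [hcomm]; exact hpinv1
  have hρQ : ρ * (R * R * ρ) = ρ := by
    rw [← Matrix.mul_assoc]; exact hpinv1
  -- Q * B = B
  have hQB : (R * R * ρ) * B = B := by
    set Q : Matrix (Fin n) (Fin n) ℂ := R * R * ρ with hQ
    have key : (Q * B - B) * (Q * B - B)ᴴ = 0 := by
      have : (Q * B - B)ᴴ = Bᴴ * Q - Bᴴ := by
        rw [Matrix.conjTranspose_sub, Matrix.conjTranspose_mul, hQherm]
      rw [this, Matrix.sub_mul, Matrix.mul_sub, Matrix.mul_sub]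
      have h1 : Q * B * (Bᴴ * Q) = ρ := by
        rw [Matrix.mul_assoc Q B, ← Matrix.mul_assoc B, hBB, ← Matrix.mul_assoc, hQρ, hρQ]
      have h2 : Q * B * Bᴴ = ρ := by rw [Matrix.mul_assoc, hBB, hQρ]
      have h3 : B * (Bᴴ * Q) = ρ := by
        rw [← Matrix.mul_assoc, hBB, hρQ]
      rw [h1, h2, h3, hBB]
      simp
    have := Matrix.self_mul_conjTranspose_eq_zero.mp key
    linear_combination (norm := abel) this
  -- the candidate square root of G
  set S : Matrix (Fin m) (Fin m) ℂ := Bᴴ * R * B with hS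
  have hSpsd : S.PosSemidef := hR.conjTranspose_mul_mul_same B
  have hmid : R * ρ * R = ρ * (R * R) := by rw [hRρ, Matrix.mul_assoc]
  have hSsq : S ^ 2 = G := by
    rw [sq, hS]
    calc Bᴴ * R * B * (Bᴴ * R * B) = Bᴴ * (R * ρ * R) * B := by
          rw [← hBB]; simp only [Matrix.mul_assoc]
    _ = Bᴴ * ((R * R * ρ) * B) := by
          rw [hmid, ← hcomm]; simp only [Matrix.mul_assoc]
    _ = G := by rw [hQB, hBtB]
  have hSsqrt : S = hG.sqrt := pgm_aux_eq_sqrt hSpsd hG hSsq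
  refine Finset.sum_congr rfl fun i _ => ?_
  rw [← hSsqrt]
  have hSdiag : S i i = (p i : ℂ) * (star (ψ i) ⬝ᵥ R.mulVec (ψ i)) := by
    rw [hS]
    simp only [Matrix.mul_apply, Matrix.conjTranspose_apply, hB, Matrix.of_apply,
      dotProduct, Matrix.mulVec, dotProduct, Pi.star_apply, star_mul',
      Complex.star_def, Complex.conj_ofReal, Finset.mul_sum, Finset.sum_mul]
    rw [Finset.sum_comm]
    refine Finset.sum_congr rfl fun k _ => ?_
    refine Finset.sum_congr rfl fun l _ => ?_
    rw [← hsq i]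
    ring
  rw [hSdiag]
  norm_num [Complex.re_ofReal_mul]
end
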